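/- Let Z be an irreducible affine curve over ℂ with a rational ℂ*-action, p ∈ Z such that the orbit map σ : ℂ* → Z, t ↦ t·p, extends to a surjective morphism σ : ℂ → Z, and suppose σ*(𝒪(Z)) = ⊕_{k∈S} ℂ·T^k ⊆ ℂ[T] for a submonoid S ⊆ ℕ. If the stabilizer {t ∈ ℂ* : t·p = p} equals the group μ_a of a-th roots of unity, then the subgroup of ℤ generated by S equals aℤ. -/

import Mathlib

/-- The integers `n` with `t ^ n = 1`, as an additive subgroup of `ℤ`. -/
def expKer (t : ℂˣ) : AddSubgroup ℤ where
  carrier := {n : ℤ | t ^ n = 1}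
  zero_mem' := by simp
  add_mem' := by
    intro x y hx hy
    simp only [Set.mem_setOf_eq] at *
    rw [zpow_add, hx, hy, one_mul]
  neg_mem' := by
    intro x hx
    simp only [Set.mem_setOf_eq] at *
    rw [zpow_neg, hx, inv_one]


/-- Orbit-closure curve lemma. Let `Z` be (the point set of) an irreducible
affine curve with a `ℂˣ`-action, `p ∈ Z`, and let `σ : ℂ → Z` be a surjective
regular extension of the orbit map `t ↦ t • p`. Suppose the pullback
`σ*(𝒪(Z))` of the ring of regular functions equals `⊕_{k ∈ S} ℂ·T^k` — since
`Z` is affine, its regular functions separate points, which we encode by: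
`σ t = σ t' ↔ t^k = t'^k` for all `k ∈ S`. If the stabilizer of `p` is the
group `μ_a` of `a`-th roots of unity, then the subgroup of `ℤ` generated by
`S` equals `aℤ`. -/
theorem curve_monoid_generates (Z : Type) [MulAction ℂˣ Z] (p : Z) (σ : ℂ → Z)
    (S : AddSubmonoid ℕ) (a : ℕ) (ha : 0 < a)
    (hσ : ∀ t : ℂˣ, σ (t : ℂ) = t • p)
    (hsurj : Function.Surjective σ)
    (hsep : ∀ t t' : ℂ, σ t = σ t' ↔ ∀ k ∈ S, t ^ k = t' ^ k)
    (hstab : ∀ t : ℂˣ, t • p = p ↔ (t : ℂ) ^ a = 1) :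
    AddSubgroup.closure ((fun k : ℕ => (k : ℤ)) '' (S : Set ℕ))
      = AddSubgroup.zmultiples (a : ℤ) := by
  -- key separation: for units, `t^k = 1` for all `k ∈ S` iff `t^a = 1`
  have key : ∀ t : ℂˣ, (∀ k ∈ S, (t : ℂ) ^ k = 1) ↔ (t : ℂ) ^ a = 1 := by
    intro t
    have h1 : σ (1 : ℂ) = p := by simpa using hσ 1
    rw [← hstab t, ← hσ t, ← h1, hsep]
    simp
  set H := AddSubgroup.closure ((fun k : ℕ => (k : ℤ)) '' (S : Set ℕ)) with hH
  obtain ⟨g, hg⟩ := Int.subgroup_cyclic H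
  set d := g.natAbs with hd
  have hHd : H = AddSubgroup.zmultiples (d : ℤ) := by
    rw [hg, ← AddSubgroup.zmultiples_eq_closure, Int.zmultiples_natAbs]
  -- membership of S in H translation
  have hSH : ∀ k ∈ S, ((d : ℤ) ∣ (k : ℤ)) := by
    intro k hk
    have : ((k : ℤ)) ∈ H := AddSubgroup.subset_closure ⟨k, hk, rfl⟩
    rw [hHd, AddSubgroup.mem_zmultiples_iff] at this
    obtain ⟨m, hm⟩ := this
    exact ⟨m, by rw [← hm, smul_eq_mul, mul_comm]⟩
  -- key2: for units, `t^k=1` for all `k ∈ S` iff `t^d = 1`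
  have key2 : ∀ t : ℂˣ, (∀ k ∈ S, (t : ℂ) ^ k = 1) ↔ (t : ℂ) ^ d = 1 := by
    intro t
    constructor
    · intro h
      have hle : H ≤ expKer t := by
        rw [hH]
        apply AddSubgroup.closure_le _ |>.mpr
        rintro _ ⟨k, hk, rfl⟩
        show t ^ (k : ℤ) = 1
        rw [zpow_natCast]
        exact Units.ext (by simpa using h k hk)
      have hdm : ((d : ℤ)) ∈ H := by
        rw [hHd]; exact AddSubgroup.mem_zmultiples _
      have : t ^ (d : ℤ) = 1 := hle hdm
      rw [zpow_natCast] at this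
      rw [← Units.val_pow_eq_pow_val, this, Units.val_one]
    · intro h k hk
      have hdk : d ∣ k := Int.natCast_dvd_natCast.mp (hSH k hk)
      obtain ⟨c, rfl⟩ := hdk
      rw [pow_mul, h, one_pow]
  have key3 : ∀ t : ℂˣ, (t : ℂ) ^ d = 1 ↔ (t : ℂ) ^ a = 1 := fun t =>
    (key2 t).symm.trans (key t)
  -- d ≠ 0
  have hd0 : d ≠ 0 := by
    intro h0
    have := (key3 (Units.mk0 2 two_ne_zero)).mp (by rw [h0, pow_zero])
    simp only [Units.val_mk0] at this
    have h2 : (2 : ℂ) ^ a = 1 := this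
    have habs := congrArg (‖·‖) h2
    rw [norm_pow, Complex.norm_two, norm_one] at habs
    have h3 : (1 : ℝ) < 2 ^ a := one_lt_pow₀ (by norm_num) (by omega)
    linarith
  -- d = a via primitive roots
  have hda : d ∣ a := by
    have hζ := Complex.isPrimitiveRoot_exp d hd0
    have hne : Complex.exp (2 * Real.pi * Complex.I / d) ≠ 0 := Complex.exp_ne_zero _
    have := (key3 (Units.mk0 _ hne)).mp (by simpa using hζ.pow_eq_one)
    simp only [Units.val_mk0] at this
    exact hζ.dvd_of_pow_eq_one a this
  have had : a ∣ d := by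
    have hζ := Complex.isPrimitiveRoot_exp a ha.ne'
    have hne : Complex.exp (2 * Real.pi * Complex.I / a) ≠ 0 := Complex.exp_ne_zero _
    have := (key3 (Units.mk0 _ hne)).mpr (by simpa using hζ.pow_eq_one)
    simp only [Units.val_mk0] at this
    exact hζ.dvd_of_pow_eq_one d this
  have : d = a := Nat.dvd_antisymm hda had
  rw [hHd, this]
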